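/- Let (X, ‖·‖) be a real Banach space and let T : X → X be an enriched Chatterjea contraction: there exist b ∈ [0,∞) and α ∈ [0, 1/2) such that ‖b(u−v) + Tu − Tv‖ ≤ α(‖(b+1)(u−v) + v − Tv‖ + ‖(b+1)(v−u) + u − Tu‖) for all u, v ∈ X with u ≠ v. Then the fixed point problem for T is well-posed: T has a unique fixed point p ∈ X, and for every sequence (u_n) in X with ‖u_n − T u_n‖ → 0 as n → ∞, one has ‖u_n − p‖ → 0 as n → ∞. -/

import Mathlib

set_option maxHeartbeats 1000000 in
/-- The fixed point problem of an enriched Chatterjea contraction on a real Banach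
space is well-posed. -/
theorem enriched_chatterjea_contraction_wellPosed
    {X : Type*} [NormedAddCommGroup X] [NormedSpace ℝ X] [CompleteSpace X]
    (T : X → X) (b α : ℝ) (hb : 0 ≤ b) (hα0 : 0 ≤ α) (hα : α < 1 / 2)
    (hT : ∀ u v : X, u ≠ v →
      ‖b • (u - v) + T u - T v‖ ≤
        α * (‖(b + 1) • (u - v) + v - T v‖ + ‖(b + 1) • (v - u) + u - T u‖)) :
    ∃ p : X, (T p = p ∧ ∀ q : X, T q = q → q = p) ∧
      ∀ u : ℕ → X,
        Filter.Tendsto (fun n => ‖u n - T (u n)‖) Filter.atTop (nhds 0) →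
        Filter.Tendsto (fun n => ‖u n - p‖) Filter.atTop (nhds 0) := by
  have hb1 : (0:ℝ) < b + 1 := by linarith
  set l : ℝ := 1 / (b + 1) with hl
  have hl0 : 0 < l := by positivity
  have hbl : l * (b + 1) = 1 := by rw [hl]; field_simp [hb1.ne']
  set S : X → X := fun x => x + l • (T x - x) with hSdef
  have key1 : ∀ u v : X, S u - S v = l • (b • (u - v) + T u - T v) := by
    intro u v
    have hne : (1 + b) ≠ 0 := by positivity
    simp only [hSdef, hl]
    match_scalars <;> field_simp <;> ring
  have key2 : ∀ u v : X, u - S v = l • ((b + 1) • (u - v) + v - T v) := by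
    intro u v
    have hne : (1 + b) ≠ 0 := by positivity
    simp only [hSdef, hl]
    match_scalars <;> field_simp <;> ring
  have hS : ∀ u v : X, ‖S u - S v‖ ≤ α * (‖u - S v‖ + ‖v - S u‖) := by
    intro u v
    by_cases h : u = v
    · subst h; simp; positivity
    · rw [key1 u v, key2 u v, key2 v u]
      rw [norm_smul, norm_smul, norm_smul, Real.norm_of_nonneg hl0.le]
      have := hT u v h
      nlinarith [this, hl0.le]
  -- Picard iteration
  set x : ℕ → X := fun n => S^[n] 0 with hxdef
  have hx : ∀ n, x (n + 1) = S (x n) := fun n => Function.iterate_succ_apply' S n 0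
  have h1α : (0:ℝ) < 1 - α := by linarith
  set c : ℝ := α / (1 - α) with hc
  have hc0 : 0 ≤ c := by positivity
  have hc1 : c < 1 := by rw [hc, div_lt_one h1α]; linarith
  have hd : ∀ n, ‖x (n + 1) - x (n + 2)‖ ≤ c * ‖x n - x (n + 1)‖ := by
    intro n
    have h1 := hS (x n) (x (n + 1))
    rw [← hx n, ← hx (n + 1)] at h1
    simp only [sub_self, norm_zero, add_zero] at h1
    have tri : ‖x n - x (n + 2)‖ ≤ ‖x n - x (n + 1)‖ + ‖x (n + 1) - x (n + 2)‖ := by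
      have := dist_triangle (x n) (x (n + 1)) (x (n + 2))
      simpa [dist_eq_norm] using this
    rw [hc, div_mul_eq_mul_div, le_div_iff₀ h1α]
    have htri' : α * ‖x n - x (n + 2)‖ ≤ α * (‖x n - x (n + 1)‖ + ‖x (n + 1) - x (n + 2)‖) :=
      mul_le_mul_of_nonneg_left tri hα0
    nlinarith [h1, htri']
  have hgeo : ∀ n, dist (x n) (x (n + 1)) ≤ ‖x 0 - x 1‖ * c ^ n := by
    intro n
    induction n with
    | zero => simp [dist_eq_norm]
    | succ n ih =>
      have := hd n
      rw [dist_eq_norm]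
      calc ‖x (n + 1) - x (n + 2)‖ ≤ c * ‖x n - x (n + 1)‖ := hd n
        _ = c * dist (x n) (x (n + 1)) := by rw [dist_eq_norm]
        _ ≤ c * (‖x 0 - x 1‖ * c ^ n) := by
            exact mul_le_mul_of_nonneg_left ih hc0
        _ = ‖x 0 - x 1‖ * c ^ (n + 1) := by ring
  have hcauchy : CauchySeq x := cauchySeq_of_le_geometric c (‖x 0 - x 1‖) hc1 hgeo
  obtain ⟨p, hp⟩ := cauchySeq_tendsto_of_complete hcauchy
  have hxp : Filter.Tendsto (fun n => ‖x n - p‖) Filter.atTop (nhds 0) :=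
    tendsto_iff_norm_sub_tendsto_zero.mp hp
  -- S p = p
  have hK : ∀ n, (1 - α) * ‖p - S p‖ ≤ (1 + α) * ‖x (n + 2) - p‖ + α * ‖x (n + 1) - p‖ := by
    intro n
    have h1 := hS p (x (n + 1))
    rw [← hx (n + 1)] at h1
    have t1 : ‖p - S p‖ ≤ ‖p - x (n + 2)‖ + ‖x (n + 2) - S p‖ := by
      have := dist_triangle p (x (n + 2)) (S p)
      simpa [dist_eq_norm] using this
    have t2 : ‖x (n + 1) - S p‖ ≤ ‖x (n + 1) - p‖ + ‖p - S p‖ := by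
      have := dist_triangle (x (n + 1)) p (S p)
      simpa [dist_eq_norm] using this
    have e1 : ‖S p - x (n + 2)‖ = ‖x (n + 2) - S p‖ := norm_sub_rev _ _
    have e2 : ‖p - x (n + 2)‖ = ‖x (n + 2) - p‖ := norm_sub_rev _ _
    have t2' : α * ‖x (n + 1) - S p‖ ≤ α * (‖x (n + 1) - p‖ + ‖p - S p‖) :=
      mul_le_mul_of_nonneg_left t2 hα0
    nlinarith [h1, t1, t2']
  have hshift2 : Filter.Tendsto (fun n => ‖x (n + 2) - p‖) Filter.atTop (nhds 0) :=
    hxp.comp (Filter.tendsto_add_atTop_nat 2)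
  have hshift1 : Filter.Tendsto (fun n => ‖x (n + 1) - p‖) Filter.atTop (nhds 0) :=
    hxp.comp (Filter.tendsto_add_atTop_nat 1)
  have hlim : Filter.Tendsto
      (fun n => (1 + α) * ‖x (n + 2) - p‖ + α * ‖x (n + 1) - p‖) Filter.atTop (nhds 0) := by
    have := (hshift2.const_mul (1 + α)).add (hshift1.const_mul α)
    simpa using this
  have hle : (1 - α) * ‖p - S p‖ ≤ 0 := ge_of_tendsto' hlim hK
  have hnorm0 : ‖p - S p‖ = 0 := le_antisymm (by nlinarith [norm_nonneg (p - S p)]) (norm_nonneg _)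
  have hSp : S p = p := (sub_eq_zero.mp (norm_eq_zero.mp hnorm0)).symm
  have hTp : T p = p := by
    have h0 : l • (T p - p) = 0 := by
      have h := hSp
      simp only [hSdef] at h
      linear_combination (norm := abel) h
    rcases smul_eq_zero.mp h0 with h | h
    · exact absurd h hl0.ne'
    · exact sub_eq_zero.mp h
  have huniq : ∀ q : X, T q = q → q = p := by
    intro q hq
    have hSq : S q = q := by simp [hSdef, hq]
    have h1 := hS q p
    rw [hSq, hSp] at h1
    have e1 : ‖p - q‖ = ‖q - p‖ := norm_sub_rev _ _
    have h2 : ‖q - p‖ = 0 := le_antisymm (by nlinarith [norm_nonneg (q - p)]) (norm_nonneg _)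
    exact sub_eq_zero.mp (norm_eq_zero.mp h2)
  refine ⟨p, ⟨hTp, huniq⟩, ?_⟩
  intro u hu
  have h2α : (0:ℝ) < 1 - 2 * α := by linarith
  have heq : ∀ n, ‖u n - S (u n)‖ = l * ‖u n - T (u n)‖ := by
    intro n
    rw [show u n - S (u n) = l • (u n - T (u n)) by simp only [hSdef]; module]
    rw [norm_smul, Real.norm_of_nonneg hl0.le]
  have he : Filter.Tendsto (fun n => ‖u n - S (u n)‖) Filter.atTop (nhds 0) := by
    simp only [heq]
    simpa using hu.const_mul l
  have hbound : ∀ n, ‖u n - p‖ ≤ ((1 + α) / (1 - 2 * α)) * ‖u n - S (u n)‖ := by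
    intro n
    have h1 := hS (u n) p
    rw [hSp] at h1
    have t1 : ‖u n - p‖ ≤ ‖u n - S (u n)‖ + ‖S (u n) - p‖ := by
      have := dist_triangle (u n) (S (u n)) p
      simpa [dist_eq_norm] using this
    have t2 : ‖p - S (u n)‖ ≤ ‖p - u n‖ + ‖u n - S (u n)‖ := by
      have := dist_triangle p (u n) (S (u n))
      simpa [dist_eq_norm] using this
    have e1 : ‖p - u n‖ = ‖u n - p‖ := norm_sub_rev _ _
    rw [e1] at t2
    have t2' : α * ‖p - S (u n)‖ ≤ α * (‖u n - p‖ + ‖u n - S (u n)‖) :=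
      mul_le_mul_of_nonneg_left t2 hα0
    rw [div_mul_eq_mul_div, le_div_iff₀ h2α]
    nlinarith [h1, t1, t2']
  exact squeeze_zero (fun n => norm_nonneg _) hbound
    (by simpa using he.const_mul ((1 + α) / (1 - 2 * α)))
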